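/- Let A : [0,∞) → ℝ be continuous, and define q_linear(x,y,T) = (2y/σ_A²(T)) · (m_{1,A}(T)m_{2,A}(T) - σ_A²(T) + m_{1,A}(T)x). Then for each fixed y > 0, the function (x,T) ↦ q_linear(x,y,T) is a classical solution on {x ∈ ℝ, T > 0} of the Hamilton–Jacobi equation ∂q/∂T = -λ(x,y,T)∂q/∂x - (1/2)(∂q/∂x)², where λ(x,y,T) = (A(T) + 1/σ_A²(T))x - 1 + m_{2,A}(T)/σ_A²(T) - m_{1,A}(T)y/σ_A²(T). -/

import Mathlib

noncomputable def m1 (A : ℝ → ℝ) (s T : ℝ) : ℝ := Real.exp (∫ u in s..T, A u)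

noncomputable def m2 (A : ℝ → ℝ) (s T : ℝ) : ℝ :=
  ∫ u in s..T, Real.exp (∫ v in u..T, A v)

noncomputable def sig2 (A : ℝ → ℝ) (s T : ℝ) : ℝ :=
  ∫ u in s..T, Real.exp (2 * ∫ v in u..T, A v)

/-- The drift of the conditioned bridge process. -/
noncomputable def lam (A : ℝ → ℝ) (x y T : ℝ) : ℝ :=
  (A T + 1 / sig2 A 0 T) * x - 1 + m2 A 0 T / sig2 A 0 T
    - m1 A 0 T * y / sig2 A 0 T

/-- The linear solution of the Hamilton–Jacobi equation. -/
noncomputable def qlin (A : ℝ → ℝ) (x y T : ℝ) : ℝ :=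
  (2 * y / sig2 A 0 T) * (m1 A 0 T * m2 A 0 T - sig2 A 0 T + m1 A 0 T * x)

theorem stmt_10 (A : ℝ → ℝ) (hA : Continuous A) (y : ℝ) (hy : 0 < y) :
    ∀ x : ℝ, ∀ T > (0:ℝ),
      deriv (fun T' => qlin A x y T') T =
        -lam A x y T * deriv (fun x' => qlin A x' y T) x
          - 1/2 * (deriv (fun x' => qlin A x' y T) x)^2 := by
  intro x T hT
  set G : ℝ → ℝ := fun t => ∫ u in (0:ℝ)..t, A u with hGdef
  have hG : ∀ t : ℝ, HasDerivAt G (A t) t := by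
    intro t
    exact intervalIntegral.integral_hasDerivAt_right (hA.intervalIntegrable _ _)
      (hA.stronglyMeasurableAtFilter _ _) hA.continuousAt
  have hGcont : Continuous G := by
    rw [continuous_iff_continuousAt]
    exact fun t => (hG t).continuousAt
  -- rewrite m2 and sig2 as products
  have hsub : ∀ u t : ℝ, (∫ v in u..t, A v) = G t - G u := by
    intro u t
    rw [hGdef]
    simp only
    rw [← intervalIntegral.integral_interval_sub_left (hA.intervalIntegrable _ _)
      (hA.intervalIntegrable _ _)]
  have hm2eq : ∀ t : ℝ, m2 A 0 t = Real.exp (G t) * ∫ u in (0:ℝ)..t, Real.exp (-(G u)) := by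
    intro t
    unfold m2
    rw [← intervalIntegral.integral_const_mul]
    apply intervalIntegral.integral_congr
    intro u _
    show Real.exp (∫ v in u..t, A v) = Real.exp (G t) * Real.exp (-(G u))
    rw [hsub u t, ← Real.exp_add]
    ring_nf
  have hsig2eq : ∀ t : ℝ, sig2 A 0 t
      = Real.exp (2 * G t) * ∫ u in (0:ℝ)..t, Real.exp (-(2 * G u)) := by
    intro t
    unfold sig2
    rw [← intervalIntegral.integral_const_mul]
    apply intervalIntegral.integral_congr
    intro u _
    show Real.exp (2 * ∫ v in u..t, A v) = Real.exp (2 * G t) * Real.exp (-(2 * G u))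
    rw [hsub u t, ← Real.exp_add]
    ring_nf
  -- derivatives
  have hm1 : HasDerivAt (fun t => m1 A 0 t) (A T * m1 A 0 T) T := by
    have := (hG T).exp
    simpa [m1, hGdef, mul_comm] using this
  have hJ : HasDerivAt (fun t => ∫ u in (0:ℝ)..t, Real.exp (-(G u))) (Real.exp (-(G T))) T := by
    have hc : Continuous fun u => Real.exp (-(G u)) := (hGcont.neg).rexp
    exact intervalIntegral.integral_hasDerivAt_right (hc.intervalIntegrable _ _)
      (hc.stronglyMeasurableAtFilter _ _) hc.continuousAt
  have hK : HasDerivAt (fun t => ∫ u in (0:ℝ)..t, Real.exp (-(2 * G u)))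
      (Real.exp (-(2 * G T))) T := by
    have hc : Continuous fun u => Real.exp (-(2 * G u)) :=
      ((continuous_const.mul hGcont).neg).rexp
    exact intervalIntegral.integral_hasDerivAt_right (hc.intervalIntegrable _ _)
      (hc.stronglyMeasurableAtFilter _ _) hc.continuousAt
  have hm2 : HasDerivAt (fun t => m2 A 0 t) (1 + A T * m2 A 0 T) T := by
    have h1 : HasDerivAt (fun t => Real.exp (G t) * ∫ u in (0:ℝ)..t, Real.exp (-(G u)))
        (Real.exp (G T) * A T * (∫ u in (0:ℝ)..T, Real.exp (-(G u)))
          + Real.exp (G T) * Real.exp (-(G T))) T := ((hG T).exp).mul hJ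
    have heq : (fun t => m2 A 0 t)
        = fun t => Real.exp (G t) * ∫ u in (0:ℝ)..t, Real.exp (-(G u)) := funext hm2eq
    rw [heq]
    convert h1 using 1
    rw [← Real.exp_add, add_neg_cancel, Real.exp_zero, hm2eq T]
    ring
  have hsig : HasDerivAt (fun t => sig2 A 0 t) (1 + 2 * A T * sig2 A 0 T) T := by
    have h1 : HasDerivAt (fun t => Real.exp (2 * G t) * ∫ u in (0:ℝ)..t, Real.exp (-(2 * G u)))
        (Real.exp (2 * G T) * (2 * A T) * (∫ u in (0:ℝ)..T, Real.exp (-(2 * G u)))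
          + Real.exp (2 * G T) * Real.exp (-(2 * G T))) T := by
      have h2 : HasDerivAt (fun t => Real.exp (2 * G t)) (Real.exp (2 * G T) * (2 * A T)) T := by
        have := (((hG T).const_mul 2).exp)
        simpa [mul_comm] using this
      exact h2.mul hK
    have heq : (fun t => sig2 A 0 t)
        = fun t => Real.exp (2 * G t) * ∫ u in (0:ℝ)..t, Real.exp (-(2 * G u)) :=
      funext hsig2eq
    rw [heq]
    convert h1 using 1
    rw [← Real.exp_add, add_neg_cancel, Real.exp_zero, hsig2eq T]
    ring
  -- positivity of sig2
  have hspos : 0 < sig2 A 0 T := by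
    rw [hsig2eq T]
    apply mul_pos (Real.exp_pos _)
    have hc : Continuous fun u => Real.exp (-(2 * G u)) :=
      ((continuous_const.mul hGcont).neg).rexp
    exact intervalIntegral.intervalIntegral_pos_of_pos (hc.intervalIntegrable _ _)
      (fun u => Real.exp_pos _) hT
  set s := sig2 A 0 T
  set a := m1 A 0 T
  set b := m2 A 0 T
  have hs0 : s ≠ 0 := ne_of_gt hspos
  -- x-derivative
  have hqx : deriv (fun x' => qlin A x' y T) x = 2 * y / s * a := by
    have h : HasDerivAt (fun x' => qlin A x' y T) (2 * y / s * a) x := by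
      have h1 : HasDerivAt (fun x' : ℝ => a * b - s + a * x') a x := by
        simpa using (((hasDerivAt_id x).const_mul a).const_add (a * b - s))
      have := h1.const_mul (2 * y / s)
      simpa [qlin, mul_comm] using this
    exact h.deriv
  -- T-derivative
  have hqT : deriv (fun T' => qlin A x y T') T =
      (-(2 * y) * (1 + 2 * A T * s) / s ^ 2) * (a * b - s + a * x)
        + (2 * y / s) * ((A T * a) * b + a * (1 + A T * b) - (1 + 2 * A T * s) + A T * a * x) := by
    have hc : HasDerivAt (fun t => 2 * y / sig2 A 0 t)
        (-(2 * y) * (1 + 2 * A T * s) / s ^ 2) T := by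
      have := (hasDerivAt_const T (2 * y)).div hsig hs0
      exact this.congr_deriv (by rw [zero_mul, zero_sub, neg_mul])
    have hin : HasDerivAt (fun t => m1 A 0 t * m2 A 0 t - sig2 A 0 t + m1 A 0 t * x)
        ((A T * a) * b + a * (1 + A T * b) - (1 + 2 * A T * s) + A T * a * x) T :=
      ((hm1.mul hm2).sub hsig).add (hm1.mul_const x)
    have h := hc.mul hin
    have heq : (fun T' => qlin A x y T')
        = fun t => (2 * y / sig2 A 0 t) * (m1 A 0 t * m2 A 0 t - sig2 A 0 t + m1 A 0 t * x) := by
      funext t; rfl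
    rw [heq]
    exact h.deriv
  rw [hqT, hqx]
  unfold lam
  show _ = -((A T + 1 / s) * x - 1 + b / s - a * y / s) * (2 * y / s * a)
      - 1 / 2 * (2 * y / s * a) ^ 2
  field_simp
  ring
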